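/- Suppose counterfactual conditional hazards satisfy: (i) the Y-hazard at each time s given covariate history l̄_s depends only on a_Y and not a_D, (ii) the D-hazard depends only on a_D and not a_Y, (iii) the conditional law of L_{A_Y,j} given (l̄_{j-1}, l_{A_D,j}) depends only on a_Y, and (iv) the conditional law of L_{A_D,j} given l̄_{j-1} depends only on a_D. Then the counterfactual cumulative incidence Pr(Y^{a_Y,a_D}_{K+1}=1), expressed via the factorization Σ_{l̄_K} Σ_{s=0}^{K} [Y-hazard at s under (a_Y,a_D)] · Π_{j=0}^s [D-survival × Y-survival × L_{A_Y}-density × L_{A_D}-density under (a_Y,a_D)], equals the same expression with each factor evaluated at the single-arm counterfactual a = a_Y or a = a_D respectively (equation (18) of the paper). -/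

import Mathlib

open MeasureTheory

noncomputable def pr {Ω : Type*} [MeasurableSpace Ω] (μ : Measure Ω) (s : Set Ω) : ℝ :=
  (μ s).toReal

noncomputable def cpr {Ω : Type*} [MeasurableSpace Ω] (μ : Measure Ω) (s t : Set Ω) : ℝ :=
  pr μ (s ∩ t) / pr μ t

/-- Extend a finite covariate history `l̄_n : Fin (n+1) → γ` to all of `ℕ`. -/
def extH {γ : Type*} (n : ℕ) (f : Fin (n + 1) → γ) : ℕ → γ :=
  fun j => f ⟨j % (n + 1), Nat.mod_lt j (Nat.succ_pos n)⟩

/-- The event `L̄_{j-1} = l̄_{j-1}` for the partitioned covariates `L_i = (L_{A_Y,i}, L_{A_D,i})`: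
`L_{A_Y,i} = lY_i` and `L_{A_D,i} = lD_i` for all `i < j`. -/
def covHist {Ω α β : Type*} (LY : ℕ → Ω → α) (LD : ℕ → Ω → β)
    (lY : ℕ → α) (lD : ℕ → β) (j : ℕ) : Set Ω :=
  {ω | ∀ i < j, LY i ω = lY i ∧ LD i ω = lD i}

/-- Y-hazard at `s`: `Pr(Y_{s+1}=1 | D_{s+1}=Y_s=0, L̄_s=l̄_s)`. -/
noncomputable def YhazF {Ω α β : Type*} [MeasurableSpace Ω] (μ : Measure Ω)
    (Y D : ℕ → Ω → Bool) (LY : ℕ → Ω → α) (LD : ℕ → Ω → β)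
    (lY : ℕ → α) (lD : ℕ → β) (s : ℕ) : ℝ :=
  cpr μ {ω | Y (s + 1) ω = true}
    ({ω | D (s + 1) ω = false} ∩ {ω | Y s ω = false} ∩ covHist LY LD lY lD (s + 1))

/-- D-survival at `j`: `Pr(D_{j+1}=0 | D_j=Y_j=0, L̄_j=l̄_j)`. -/
noncomputable def DsurvF {Ω α β : Type*} [MeasurableSpace Ω] (μ : Measure Ω)
    (Y D : ℕ → Ω → Bool) (LY : ℕ → Ω → α) (LD : ℕ → Ω → β)
    (lY : ℕ → α) (lD : ℕ → β) (j : ℕ) : ℝ :=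
  cpr μ {ω | D (j + 1) ω = false}
    ({ω | D j ω = false} ∩ {ω | Y j ω = false} ∩ covHist LY LD lY lD (j + 1))

/-- Y-survival at `j`: `Pr(Y_j=0 | D_j=Y_{j-1}=0, L̄_{j-1}=l̄_{j-1})` (with `Y_{-1} := 0`,
realized by truncated subtraction since `Y_0 ≡ 0`). -/
noncomputable def YsurvF {Ω α β : Type*} [MeasurableSpace Ω] (μ : Measure Ω)
    (Y D : ℕ → Ω → Bool) (LY : ℕ → Ω → α) (LD : ℕ → Ω → β)
    (lY : ℕ → α) (lD : ℕ → β) (j : ℕ) : ℝ :=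
  cpr μ {ω | Y j ω = false}
    ({ω | D j ω = false} ∩ {ω | Y (j - 1) ω = false} ∩ covHist LY LD lY lD j)

/-- `L_{A_Y}`-density at `j`: `Pr(L_{A_Y,j}=l_{A_Y,j} | Y_j=D_j=0, L̄_{j-1}=l̄_{j-1}, L_{A_D,j}=l_{A_D,j})`. -/
noncomputable def LYdensF {Ω α β : Type*} [MeasurableSpace Ω] (μ : Measure Ω)
    (Y D : ℕ → Ω → Bool) (LY : ℕ → Ω → α) (LD : ℕ → Ω → β)
    (lY : ℕ → α) (lD : ℕ → β) (j : ℕ) : ℝ :=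
  cpr μ {ω | LY j ω = lY j}
    ({ω | Y j ω = false} ∩ {ω | D j ω = false} ∩ covHist LY LD lY lD j ∩
      {ω | LD j ω = lD j})

/-- `L_{A_D}`-density at `j`: `Pr(L_{A_D,j}=l_{A_D,j} | Y_j=D_j=0, L̄_{j-1}=l̄_{j-1})`. -/
noncomputable def LDdensF {Ω α β : Type*} [MeasurableSpace Ω] (μ : Measure Ω)
    (Y D : ℕ → Ω → Bool) (LY : ℕ → Ω → α) (LD : ℕ → Ω → β)
    (lY : ℕ → α) (lD : ℕ → β) (j : ℕ) : ℝ :=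
  cpr μ {ω | LD j ω = lD j}
    ({ω | Y j ω = false} ∩ {ω | D j ω = false} ∩ covHist LY LD lY lD j)

/-- The g-formula factorization `Σ_{s=0}^K Σ_{l̄_s} [Y-hazard at s] · Π_{j=0}^s
[D-survival × Y-survival × L_{A_Y}-density × L_{A_D}-density]`, where the Y-hazard,
Y-survival and `L_{A_Y}`-density factors are conditional probabilities in one
counterfactual world (processes `Y₁, D₁, LY₁, LD₁`) and the D-survival and
`L_{A_D}`-density factors in another (`Y₂, D₂, LY₂, LD₂`). -/
noncomputable def gExpr {Ω α β : Type*} [MeasurableSpace Ω] [Fintype α] [Fintype β]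
    (μ : Measure Ω) (K : ℕ)
    (Y1 D1 : ℕ → Ω → Bool) (LY1 : ℕ → Ω → α) (LD1 : ℕ → Ω → β)
    (Y2 D2 : ℕ → Ω → Bool) (LY2 : ℕ → Ω → α) (LD2 : ℕ → Ω → β) : ℝ :=
  ∑ s ∈ Finset.range (K + 1),
    ∑ l : Fin (s + 1) → α × β,
      YhazF μ Y1 D1 LY1 LD1 (fun i => (extH s l i).1) (fun i => (extH s l i).2) s *
        ∏ j ∈ Finset.range (s + 1),
          (DsurvF μ Y2 D2 LY2 LD2 (fun i => (extH s l i).1) (fun i => (extH s l i).2) j *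
            YsurvF μ Y1 D1 LY1 LD1 (fun i => (extH s l i).1) (fun i => (extH s l i).2) j *
            LYdensF μ Y1 D1 LY1 LD1 (fun i => (extH s l i).1) (fun i => (extH s l i).2) j *
            LDdensF μ Y2 D2 LY2 LD2 (fun i => (extH s l i).1) (fun i => (extH s l i).2) j)

section Helpers

variable {Ω α β : Type*} [MeasurableSpace Ω]

lemma pr_mono (μ : Measure Ω) [IsFiniteMeasure μ] {s t : Set Ω} (h : s ⊆ t) :
    pr μ s ≤ pr μ t :=
  ENNReal.toReal_mono (measure_ne_top μ t) (measure_mono h)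

lemma pr_pos (μ : Measure Ω) [IsFiniteMeasure μ] {s : Set Ω} (h : 0 < μ s) :
    0 < pr μ s :=
  ENNReal.toReal_pos h.ne' (measure_ne_top μ s)

lemma pr_univ (μ : Measure Ω) [IsProbabilityMeasure μ] : pr μ Set.univ = 1 := by
  simp [pr]

lemma pr_biUnion (μ : Measure Ω) [IsFiniteMeasure μ] {ι : Type*} (t : Finset ι)
    (f : ι → Set Ω) (hd : (t : Set ι).PairwiseDisjoint f)
    (hm : ∀ i ∈ t, MeasurableSet (f i)) :
    pr μ (⋃ i ∈ t, f i) = ∑ i ∈ t, pr μ (f i) := by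
  unfold pr
  rw [measure_biUnion_finset hd hm, ENNReal.toReal_sum (fun i _ => measure_ne_top μ _)]

lemma pr_partition (μ : Measure Ω) [IsFiniteMeasure μ] {ι : Type*} [Fintype ι]
    (A : Set Ω) (f : ι → Set Ω) (hmA : ∀ i, MeasurableSet (A ∩ f i))
    (hd : Pairwise (Function.onFun Disjoint f)) (hcov : ∀ ω, ∃ i, ω ∈ f i) :
    pr μ A = ∑ i : ι, pr μ (A ∩ f i) := by
  have hA : A = ⋃ i ∈ (Finset.univ : Finset ι), A ∩ f i := by
    ext ω
    simp only [Set.mem_iUnion, Finset.mem_univ, Set.mem_inter_iff, exists_prop, true_and]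
    constructor
    · intro h; obtain ⟨i, hi⟩ := hcov ω; exact ⟨i, h, hi⟩
    · rintro ⟨i, h, -⟩; exact h
  have hd' : ((Finset.univ : Finset ι) : Set ι).PairwiseDisjoint fun i => A ∩ f i := by
    intro i _ j _ hij
    exact Disjoint.mono Set.inter_subset_right Set.inter_subset_right (hd hij)
  calc pr μ A = pr μ (⋃ i ∈ Finset.univ, A ∩ f i) := by rw [← hA]
    _ = ∑ i ∈ Finset.univ, pr μ (A ∩ f i) := pr_biUnion μ _ _ hd' (fun i _ => hmA i)

lemma pr_split_bool (μ : Measure Ω) [IsFiniteMeasure μ] (f : Ω → Bool)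
    (hm : MeasurableSet {ω | f ω = true}) (T : Set Ω) :
    pr μ T = pr μ ({ω | f ω = true} ∩ T) + pr μ ({ω | f ω = false} ∩ T) := by
  unfold pr
  have h1 : T ∩ {ω | f ω = true} = {ω | f ω = true} ∩ T := Set.inter_comm _ _
  have h2 : T \ {ω | f ω = true} = {ω | f ω = false} ∩ T := by
    ext ω; simp [Set.mem_diff, Set.mem_inter_iff, and_comm]
  rw [← ENNReal.toReal_add (measure_ne_top μ _) (measure_ne_top μ _)]
  congr 1
  rw [← measure_inter_add_diff T hm, h1, h2]

lemma setOf_bool_false (f : Ω → Bool) :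
    {ω | f ω = false} = {ω | f ω = true}ᶜ := by
  ext ω; simp

lemma covHist_zero (LY : ℕ → Ω → α) (LD : ℕ → Ω → β) (lY : ℕ → α) (lD : ℕ → β) :
    covHist LY LD lY lD 0 = Set.univ := by
  ext ω; simp [covHist]

lemma covHist_succ_mem (LY : ℕ → Ω → α) (LD : ℕ → Ω → β) (lY : ℕ → α) (lD : ℕ → β)
    (j : ℕ) (ω : Ω) :
    ω ∈ covHist LY LD lY lD (j + 1) ↔
      ω ∈ covHist LY LD lY lD j ∧ LY j ω = lY j ∧ LD j ω = lD j := by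
  simp only [covHist, Set.mem_setOf_eq, Nat.lt_succ_iff_lt_or_eq]
  constructor
  · intro h
    exact ⟨fun i hi => h i (Or.inl hi), (h j (Or.inr rfl)).1, (h j (Or.inr rfl)).2⟩
  · rintro ⟨h, h1, h2⟩ i hi
    rcases hi with hi | rfl
    · exact h i hi
    · exact ⟨h1, h2⟩

lemma covHist_measurable (LY : ℕ → Ω → α) (LD : ℕ → Ω → β)
    (hmLY : ∀ n x, MeasurableSet {ω | LY n ω = x})
    (hmLD : ∀ n x, MeasurableSet {ω | LD n ω = x})
    (lY : ℕ → α) (lD : ℕ → β) (j : ℕ) :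
    MeasurableSet (covHist LY LD lY lD j) := by
  have : covHist LY LD lY lD j =
      ⋂ i ∈ Finset.range j, ({ω | LY i ω = lY i} ∩ {ω | LD i ω = lD i}) := by
    ext ω
    simp [covHist, Set.mem_iInter, Set.mem_inter_iff]
  rw [this]
  exact Finset.measurableSet_biInter _ fun i _ => (hmLY i _).inter (hmLD i _)

lemma absorb_true {Y : ℕ → Ω → Bool} (habs : ∀ n ω, Y n ω = true → Y (n + 1) ω = true)
    {n m : ℕ} (h : n ≤ m) (ω : Ω) (hn : Y n ω = true) : Y m ω = true :=
  Nat.le_induction hn (fun k _ ih => habs k ω ih) m h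

lemma absorb_false {Y : ℕ → Ω → Bool} (habs : ∀ n ω, Y n ω = true → Y (n + 1) ω = true)
    {n m : ℕ} (h : n ≤ m) (ω : Ω) (hm : Y m ω = false) : Y n ω = false := by
  by_contra hc
  have hn : Y n ω = true := by revert hc; cases Y n ω <;> simp
  rw [absorb_true habs h ω hn] at hm
  exact Bool.noConfusion hm

lemma extH_lt {γ : Type*} (n : ℕ) (f : Fin (n + 1) → γ) {i : ℕ} (h : i < n + 1) :
    extH n f i = f ⟨i, h⟩ := by
  unfold extH
  congr 1
  exact Fin.ext (Nat.mod_eq_of_lt h)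

/-- The "B" event `{D_{j+1}=0, Y_j=0, L̄_j=l̄_j}`. -/
def Bset (Y D : ℕ → Ω → Bool) (LY : ℕ → Ω → α) (LD : ℕ → Ω → β)
    (lY : ℕ → α) (lD : ℕ → β) (j : ℕ) : Set Ω :=
  {ω | D (j + 1) ω = false} ∩ {ω | Y j ω = false} ∩ covHist LY LD lY lD (j + 1)

/-- The "H" event `{D_j=0, Y_{j-1}=0, L̄_{j-1}=l̄_{j-1}}`. -/
def Hset (Y D : ℕ → Ω → Bool) (LY : ℕ → Ω → α) (LD : ℕ → Ω → β)
    (lY : ℕ → α) (lD : ℕ → β) (j : ℕ) : Set Ω :=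
  {ω | D j ω = false} ∩ {ω | Y (j - 1) ω = false} ∩ covHist LY LD lY lD j

lemma Hset_succ (Y D : ℕ → Ω → Bool) (LY : ℕ → Ω → α) (LD : ℕ → Ω → β)
    (lY : ℕ → α) (lD : ℕ → β) (j : ℕ) :
    Hset Y D LY LD lY lD (j + 1) = Bset Y D LY LD lY lD j := rfl

lemma Hset_zero (Y D : ℕ → Ω → Bool) (LY : ℕ → Ω → α) (LD : ℕ → Ω → β)
    (lY : ℕ → α) (lD : ℕ → β) (hY0 : ∀ ω, Y 0 ω = false) (hD0 : ∀ ω, D 0 ω = false) :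
    Hset Y D LY LD lY lD 0 = Set.univ := by
  ext ω
  simp [Hset, covHist_zero, hY0, hD0, covHist]

/-- One factor of the product equals `pr(B_j)/pr(H_j)`. -/
lemma term_eq (μ : Measure Ω) [IsProbabilityMeasure μ]
    (Y D : ℕ → Ω → Bool) (LY : ℕ → Ω → α) (LD : ℕ → Ω → β)
    (lY : ℕ → α) (lD : ℕ → β)
    (hYabs : ∀ n ω, Y n ω = true → Y (n + 1) ω = true)
    (hDabs : ∀ n ω, D n ω = true → D (n + 1) ω = true)
    (j : ℕ) (hB : 0 < pr μ (Bset Y D LY LD lY lD j)) :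
    DsurvF μ Y D LY LD lY lD j * YsurvF μ Y D LY LD lY lD j *
      LYdensF μ Y D LY LD lY lD j * LDdensF μ Y D LY LD lY lD j =
    pr μ (Bset Y D LY LD lY lD j) / pr μ (Hset Y D LY LD lY lD j) := by
  classical
  set Cs : Set Ω := {ω | D j ω = false} ∩ {ω | Y j ω = false} ∩ covHist LY LD lY lD (j + 1)
    with hCs
  set Fs : Set Ω := {ω | Y j ω = false} ∩ {ω | D j ω = false} ∩ covHist LY LD lY lD j
    with hFs
  set Es : Set Ω := {ω | Y j ω = false} ∩ {ω | D j ω = false} ∩ covHist LY LD lY lD j ∩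
    {ω | LD j ω = lD j} with hEs
  -- numerator identifications
  have hnumD : {ω | D (j + 1) ω = false} ∩ Cs = Bset Y D LY LD lY lD j := by
    ext ω
    simp only [hCs, Bset, Set.mem_inter_iff, Set.mem_setOf_eq]
    constructor
    · rintro ⟨h1, ⟨h2, h3⟩, h4⟩; exact ⟨⟨h1, h3⟩, h4⟩
    · rintro ⟨⟨h1, h3⟩, h4⟩
      exact ⟨h1, ⟨absorb_false hDabs (Nat.le_succ j) ω h1, h3⟩, h4⟩
  have hnumY : {ω | Y j ω = false} ∩ ({ω | D j ω = false} ∩ {ω | Y (j - 1) ω = false} ∩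
      covHist LY LD lY lD j) = Fs := by
    ext ω
    simp only [hFs, Set.mem_inter_iff, Set.mem_setOf_eq]
    constructor
    · rintro ⟨h1, ⟨h2, h3⟩, h4⟩; exact ⟨⟨h1, h2⟩, h4⟩
    · rintro ⟨⟨h1, h2⟩, h4⟩
      exact ⟨h1, ⟨h2, absorb_false hYabs (Nat.sub_le j 1) ω h1⟩, h4⟩
  have hnumLY : {ω | LY j ω = lY j} ∩ Es = Cs := by
    ext ω
    simp only [hEs, hCs, Set.mem_inter_iff, Set.mem_setOf_eq,
      covHist_succ_mem LY LD lY lD j ω]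
    constructor
    · rintro ⟨h1, ⟨⟨hy, hd⟩, hc⟩, hl⟩; exact ⟨⟨hd, hy⟩, hc, h1, hl⟩
    · rintro ⟨⟨hd, hy⟩, hc, h1, hl⟩; exact ⟨h1, ⟨⟨hy, hd⟩, hc⟩, hl⟩
  have hnumLD : {ω | LD j ω = lD j} ∩ ({ω | Y j ω = false} ∩ {ω | D j ω = false} ∩
      covHist LY LD lY lD j) = Es := by
    ext ω
    simp only [hEs, Set.mem_inter_iff, Set.mem_setOf_eq]
    tauto
  -- subsets for positivity
  have hBC : Bset Y D LY LD lY lD j ⊆ Cs := by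
    rintro ω ⟨⟨h1, h2⟩, h3⟩
    exact ⟨⟨absorb_false hDabs (Nat.le_succ j) ω h1, h2⟩, h3⟩
  have hCE : Cs ⊆ Es := by
    rintro ω ⟨⟨hd, hy⟩, hc⟩
    rw [covHist_succ_mem] at hc
    exact ⟨⟨⟨hy, hd⟩, hc.1⟩, hc.2.2⟩
  have hEF : Es ⊆ Fs := fun ω h => h.1
  have hC : 0 < pr μ Cs := lt_of_lt_of_le hB (pr_mono μ hBC)
  have hE : 0 < pr μ Es := lt_of_lt_of_le hC (pr_mono μ hCE)
  have hF : 0 < pr μ Fs := lt_of_lt_of_le hE (pr_mono μ hEF)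
  have hfold : ({ω | D j ω = false} ∩ {ω | Y (j - 1) ω = false} ∩
      covHist LY LD lY lD j) = Hset Y D LY LD lY lD j := rfl
  unfold DsurvF YsurvF LYdensF LDdensF cpr
  rw [hnumD, hnumY, hnumLY, hnumLD, hfold]
  rcases eq_or_ne (pr μ (Hset Y D LY LD lY lD j)) 0 with h0 | h0
  · rw [h0]; simp
  · rw [← hEs, ← hFs, ← hCs]
    field_simp

/-- Telescoping product: `Π_{j=0}^s term_j = pr(B_s)`. -/
lemma prod_term_eq (μ : Measure Ω) [IsProbabilityMeasure μ] (K : ℕ)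
    (Y D : ℕ → Ω → Bool) (LY : ℕ → Ω → α) (LD : ℕ → Ω → β)
    (lY : ℕ → α) (lD : ℕ → β)
    (hY0 : ∀ ω, Y 0 ω = false) (hD0 : ∀ ω, D 0 ω = false)
    (hYabs : ∀ n ω, Y n ω = true → Y (n + 1) ω = true)
    (hDabs : ∀ n ω, D n ω = true → D (n + 1) ω = true)
    (hpos : ∀ j ≤ K, 0 < pr μ (Bset Y D LY LD lY lD j)) :
    ∀ s ≤ K, ∏ j ∈ Finset.range (s + 1),
      (DsurvF μ Y D LY LD lY lD j * YsurvF μ Y D LY LD lY lD j *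
        LYdensF μ Y D LY LD lY lD j * LDdensF μ Y D LY LD lY lD j) =
      pr μ (Bset Y D LY LD lY lD s) := by
  intro s
  induction s with
  | zero =>
    intro hs
    rw [Finset.prod_range_one,
      term_eq μ Y D LY LD lY lD hYabs hDabs 0 (hpos 0 hs),
      Hset_zero Y D LY LD lY lD hY0 hD0, pr_univ μ, div_one]
  | succ s ih =>
    intro hs
    rw [Finset.prod_range_succ, ih (Nat.le_of_succ_le hs),
      term_eq μ Y D LY LD lY lD hYabs hDabs (s + 1) (hpos (s + 1) hs),
      Hset_succ]
    exact mul_div_cancel₀ _ (hpos s (Nat.le_of_succ_le hs)).ne'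

/-- The one-world g-formula: `Pr(Y_{K+1}=1)` equals the factorization with all
factors in the same world. -/
lemma gformula_one_world [Fintype α] [Fintype β]
    (μ : Measure Ω) [IsProbabilityMeasure μ] (K : ℕ)
    (Y D : ℕ → Ω → Bool) (LY : ℕ → Ω → α) (LD : ℕ → Ω → β)
    (hmY : ∀ n, MeasurableSet {ω | Y n ω = true})
    (hmLY : ∀ n x, MeasurableSet {ω | LY n ω = x})
    (hmLD : ∀ n x, MeasurableSet {ω | LD n ω = x})
    (hY0 : ∀ ω, Y 0 ω = false) (hD0 : ∀ ω, D 0 ω = false)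
    (hYabs : ∀ n ω, Y n ω = true → Y (n + 1) ω = true)
    (hDabs : ∀ n ω, D n ω = true → D (n + 1) ω = true)
    (hcomp : ∀ n ω, D (n + 1) ω = true → Y n ω = false → ∀ j, n < j → Y j ω = false)
    (hpos : ∀ (lY : ℕ → α) (lD : ℕ → β) (j : ℕ), j ≤ K →
      0 < μ (Bset Y D LY LD lY lD j)) :
    pr μ {ω | Y (K + 1) ω = true} = gExpr μ K Y D LY LD Y D LY LD := by
  classical
  -- the "new case at time s" events
  set A : ℕ → Set Ω := fun s => {ω | Y (s + 1) ω = true} ∩ {ω | Y s ω = false} with hA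
  have hmA : ∀ s, MeasurableSet (A s) := fun s => by
    rw [hA]
    exact (hmY (s + 1)).inter (by rw [setOf_bool_false]; exact (hmY s).compl)
  -- decomposition of the outcome event
  have hdec : {ω | Y (K + 1) ω = true} = ⋃ s ∈ Finset.range (K + 1), A s := by
    ext ω
    simp only [Set.mem_iUnion, Finset.mem_range, Set.mem_setOf_eq, exists_prop, hA,
      Set.mem_inter_iff]
    constructor
    · intro h
      have hex : ∃ n, Y n ω = true := ⟨K + 1, h⟩
      have hfind : Y (Nat.find hex) ω = true := Nat.find_spec hex
      have hle : Nat.find hex ≤ K + 1 := Nat.find_le h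
      have hne : Nat.find hex ≠ 0 := by
        intro h0
        rw [h0, hY0 ω] at hfind
        exact Bool.noConfusion hfind
      obtain ⟨s, hs⟩ := Nat.exists_eq_succ_of_ne_zero hne
      rw [hs] at hfind hle
      refine ⟨s, by omega, hfind, ?_⟩
      have hmin := Nat.find_min hex (m := s) (by omega)
      revert hmin; cases Y s ω <;> simp
    · rintro ⟨s, hsK, h1, -⟩
      exact absorb_true hYabs (by omega) ω h1
  have hdisj : ((Finset.range (K + 1) : Finset ℕ) : Set ℕ).PairwiseDisjoint A := by
    intro s _ t _ hst
    have key : ∀ a b : ℕ, a < b → Disjoint (A a) (A b) := by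
      intro a b hab
      rw [Set.disjoint_left]
      rintro ω ⟨ha1, -⟩ ⟨-, hb2⟩
      have h1 : Y (a + 1) ω = true := ha1
      have h2 : Y b ω = false := hb2
      rw [absorb_true hYabs (by omega : a + 1 ≤ b) ω h1] at h2
      exact Bool.noConfusion h2
    rcases lt_or_gt_of_ne hst with h | h
    · exact key s t h
    · exact (key t s h).symm
  have hsum : pr μ {ω | Y (K + 1) ω = true} = ∑ s ∈ Finset.range (K + 1), pr μ (A s) := by
    rw [hdec, pr_biUnion μ _ _ hdisj (fun s _ => hmA s)]
  -- per-s partition over covariate histories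
  rw [hsum]
  unfold gExpr
  refine Finset.sum_congr rfl fun s hs => ?_
  replace hs : s ≤ K := by
    rw [Finset.mem_range] at hs; omega
  set cov : (Fin (s + 1) → α × β) → Set Ω := fun l =>
    covHist LY LD (fun i => (extH s l i).1) (fun i => (extH s l i).2) (s + 1) with hcovdef
  have hcovm : ∀ l, MeasurableSet (cov l) := fun l =>
    covHist_measurable LY LD hmLY hmLD _ _ _
  have hcovd : Pairwise (Function.onFun Disjoint cov) := by
    intro l l' hll
    rw [Function.onFun, Set.disjoint_left]
    intro ω h1 h2
    apply hll
    funext k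
    have e1 := h1 k.1 k.2
    have e2 := h2 k.1 k.2
    simp only [extH_lt s l k.2, Fin.eta] at e1
    simp only [extH_lt s l' k.2, Fin.eta] at e2
    rw [Prod.ext_iff]
    exact ⟨e1.1.symm.trans e2.1, e1.2.symm.trans e2.2⟩
  have hcovc : ∀ ω, ∃ l, ω ∈ cov l := by
    intro ω
    refine ⟨fun k => (LY k.1 ω, LD k.1 ω), fun i hi => ?_⟩
    simp [extH_lt s _ hi]
  rw [pr_partition μ (A s) cov (fun l => (hmA s).inter (hcovm l)) hcovd hcovc]
  refine Finset.sum_congr rfl fun l _ => ?_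
  -- identify each cell probability with Yhaz * Π terms
  have hBpos : ∀ j ≤ K,
      0 < pr μ (Bset Y D LY LD (fun i => (extH s l i).1) (fun i => (extH s l i).2) j) :=
    fun j hj => pr_pos μ (hpos _ _ j hj)
  rw [prod_term_eq μ K Y D LY LD _ _ hY0 hD0 hYabs hDabs hBpos s hs]
  have hcell : {ω | Y (s + 1) ω = true} ∩
      Bset Y D LY LD (fun i => (extH s l i).1) (fun i => (extH s l i).2) s =
      A s ∩ cov l := by
    ext ω
    simp only [Bset, hA, hcovdef, Set.mem_inter_iff, Set.mem_setOf_eq]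
    constructor
    · rintro ⟨h1, ⟨hd, hy⟩, hc⟩; exact ⟨⟨h1, hy⟩, hc⟩
    · rintro ⟨⟨h1, hy⟩, hc⟩
      refine ⟨h1, ⟨?_, hy⟩, hc⟩
      cases hds : D (s + 1) ω
      · rfl
      · have := hcomp s ω hds hy (s + 1) (Nat.lt_succ_self s)
        rw [this] at h1
        exact Bool.noConfusion h1
  unfold YhazF cpr
  rw [show ({ω | D (s + 1) ω = false} ∩ {ω | Y s ω = false} ∩
      covHist LY LD (fun i => (extH s l i).1) (fun i => (extH s l i).2) (s + 1)) =
      Bset Y D LY LD (fun i => (extH s l i).1) (fun i => (extH s l i).2) s from rfl,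
    div_mul_cancel₀ _ (hBpos s hs).ne', hcell]

/-- Y-survival at `j+1` is one minus the Y-hazard at `j`. -/
lemma Ysurv_eq_one_sub (μ : Measure Ω) [IsProbabilityMeasure μ]
    (Y D : ℕ → Ω → Bool) (LY : ℕ → Ω → α) (LD : ℕ → Ω → β)
    (lY : ℕ → α) (lD : ℕ → β) (j : ℕ)
    (hmY : MeasurableSet {ω | Y (j + 1) ω = true})
    (hB : 0 < pr μ (Bset Y D LY LD lY lD j)) :
    YsurvF μ Y D LY LD lY lD (j + 1) = 1 - YhazF μ Y D LY LD lY lD j := by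
  unfold YsurvF YhazF cpr
  have hden : ({ω | D (j + 1) ω = false} ∩ {ω | Y (j + 1 - 1) ω = false} ∩
      covHist LY LD lY lD (j + 1)) = Bset Y D LY LD lY lD j := rfl
  rw [hden]
  have hsplit := pr_split_bool μ (Y (j + 1)) hmY (Bset Y D LY LD lY lD j)
  have : pr μ ({ω | Y (j + 1) ω = false} ∩ Bset Y D LY LD lY lD j) =
      pr μ (Bset Y D LY LD lY lD j) -
        pr μ ({ω | Y (j + 1) ω = true} ∩ Bset Y D LY LD lY lD j) := by
    linarith
  rw [this, sub_div, div_self hB.ne']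
  rfl

/-- Y-survival at `0` equals `1`. -/
lemma Ysurv_zero (μ : Measure Ω) [IsProbabilityMeasure μ]
    (Y D : ℕ → Ω → Bool) (LY : ℕ → Ω → α) (LD : ℕ → Ω → β)
    (lY : ℕ → α) (lD : ℕ → β)
    (hY0 : ∀ ω, Y 0 ω = false) (hD0 : ∀ ω, D 0 ω = false) :
    YsurvF μ Y D LY LD lY lD 0 = 1 := by
  unfold YsurvF cpr
  have h1 : ({ω | D 0 ω = false} ∩ {ω | Y (0 - 1) ω = false} ∩
      covHist LY LD lY lD 0) = Set.univ := by
    ext ω; simp [hY0, hD0, covHist_zero, covHist]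
  rw [h1, Set.inter_univ, pr_univ μ]
  have h2 : {ω | Y 0 ω = false} = Set.univ := by ext ω; simp [hY0]
  rw [h2, pr_univ μ, div_one]

end Helpers

/-- under the cross-world equalities (i)–(iv) of Lemma 1 — the Y-hazard
depends only on `a_Y`, the D-hazard only on `a_D`, the conditional law of `L_{A_Y,j}`
only on `a_Y` and that of `L_{A_D,j}` only on `a_D` — the counterfactual cumulative
incidence `Pr(Y^{a_Y,a_D}_{K+1}=1)` equals its factorization with all factors in the
world `(a_Y, a_D)`, and this expression equals the same expression with the
Y-side factors evaluated at the single-arm counterfactual `a = a_Y` (world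
`(a_Y, a_Y)`) and the D-side factors at `a = a_D` (world `(a_D, a_D)`). -/
theorem separable_effects_factor_swap
    {Ω α β : Type*} [MeasurableSpace Ω] [Fintype α] [Fintype β]
    (μ : Measure Ω) [IsProbabilityMeasure μ] (K : ℕ)
    (Yc Dc : Bool → Bool → ℕ → Ω → Bool)
    (LYc : Bool → Bool → ℕ → Ω → α) (LDc : Bool → Bool → ℕ → Ω → β)
    (hmY : ∀ u v n, MeasurableSet {ω | Yc u v n ω = true})
    (hmD : ∀ u v n, MeasurableSet {ω | Dc u v n ω = true})
    (hmLY : ∀ u v n x, MeasurableSet {ω | LYc u v n ω = x})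
    (hmLD : ∀ u v n x, MeasurableSet {ω | LDc u v n ω = x})
    (hY0 : ∀ u v ω, Yc u v 0 ω = false)
    (hD0 : ∀ u v ω, Dc u v 0 ω = false)
    (hYabs : ∀ u v n ω, Yc u v n ω = true → Yc u v (n + 1) ω = true)
    (hDabs : ∀ u v n ω, Dc u v n ω = true → Dc u v (n + 1) ω = true)
    (hcomp : ∀ u v n ω, Dc u v (n + 1) ω = true → Yc u v n ω = false →
      ∀ j, n < j → Yc u v j ω = false)
    -- all conditioning events have positive probability
    (hpos : ∀ (u v : Bool) (lY : ℕ → α) (lD : ℕ → β) (j : ℕ), j ≤ K →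
      0 < μ ({ω | Dc u v (j + 1) ω = false} ∩ {ω | Yc u v j ω = false} ∩
        covHist (LYc u v) (LDc u v) lY lD (j + 1)))
    -- (i) the Y-hazard depends only on a_Y and not a_D
    (hYhaz : ∀ (u v v' : Bool) (lY : ℕ → α) (lD : ℕ → β) (s : ℕ),
      YhazF μ (Yc u v) (Dc u v) (LYc u v) (LDc u v) lY lD s =
        YhazF μ (Yc u v') (Dc u v') (LYc u v') (LDc u v') lY lD s)
    -- (ii) the D-hazard depends only on a_D and not a_Y
    (hDsurv : ∀ (u u' v : Bool) (lY : ℕ → α) (lD : ℕ → β) (j : ℕ),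
      DsurvF μ (Yc u v) (Dc u v) (LYc u v) (LDc u v) lY lD j =
        DsurvF μ (Yc u' v) (Dc u' v) (LYc u' v) (LDc u' v) lY lD j)
    -- (iii) the conditional law of L_{A_Y,j} depends only on a_Y
    (hLYdens : ∀ (u v v' : Bool) (lY : ℕ → α) (lD : ℕ → β) (j : ℕ),
      LYdensF μ (Yc u v) (Dc u v) (LYc u v) (LDc u v) lY lD j =
        LYdensF μ (Yc u v') (Dc u v') (LYc u v') (LDc u v') lY lD j)
    -- (iv) the conditional law of L_{A_D,j} depends only on a_D
    (hLDdens : ∀ (u u' v : Bool) (lY : ℕ → α) (lD : ℕ → β) (j : ℕ),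
      LDdensF μ (Yc u v) (Dc u v) (LYc u v) (LDc u v) lY lD j =
        LDdensF μ (Yc u' v) (Dc u' v) (LYc u' v) (LDc u' v) lY lD j)
    (aY aD : Bool) :
    pr μ {ω | Yc aY aD (K + 1) ω = true} =
        gExpr μ K (Yc aY aD) (Dc aY aD) (LYc aY aD) (LDc aY aD)
          (Yc aY aD) (Dc aY aD) (LYc aY aD) (LDc aY aD) ∧
      gExpr μ K (Yc aY aD) (Dc aY aD) (LYc aY aD) (LDc aY aD)
          (Yc aY aD) (Dc aY aD) (LYc aY aD) (LDc aY aD) =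
        gExpr μ K (Yc aY aY) (Dc aY aY) (LYc aY aY) (LDc aY aY)
          (Yc aD aD) (Dc aD aD) (LYc aD aD) (LDc aD aD) := by
  constructor
  · exact gformula_one_world μ K _ _ _ _ (hmY aY aD) (hmLY aY aD) (hmLD aY aD)
      (hY0 aY aD) (hD0 aY aD) (hYabs aY aD) (hDabs aY aD) (hcomp aY aD)
      (fun lY lD j hj => hpos aY aD lY lD j hj)
  · unfold gExpr
    refine Finset.sum_congr rfl fun s hs => Finset.sum_congr rfl fun l _ => ?_
    rw [Finset.mem_range] at hs
    congr 1
    · exact hYhaz aY aD aY _ _ s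
    · refine Finset.prod_congr rfl fun j hj => ?_
      rw [Finset.mem_range] at hj
      have hYs : YsurvF μ (Yc aY aD) (Dc aY aD) (LYc aY aD) (LDc aY aD)
          (fun i => (extH s l i).1) (fun i => (extH s l i).2) j =
          YsurvF μ (Yc aY aY) (Dc aY aY) (LYc aY aY) (LDc aY aY)
          (fun i => (extH s l i).1) (fun i => (extH s l i).2) j := by
        cases j with
        | zero =>
          rw [Ysurv_zero μ _ _ _ _ _ _ (hY0 aY aD) (hD0 aY aD),
            Ysurv_zero μ _ _ _ _ _ _ (hY0 aY aY) (hD0 aY aY)]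
        | succ m =>
          have hm : m ≤ K := by omega
          rw [Ysurv_eq_one_sub μ _ _ _ _ _ _ m (hmY aY aD (m + 1))
              (pr_pos μ (hpos aY aD _ _ m hm)),
            Ysurv_eq_one_sub μ _ _ _ _ _ _ m (hmY aY aY (m + 1))
              (pr_pos μ (hpos aY aY _ _ m hm)),
            hYhaz aY aD aY _ _ m]
      rw [hDsurv aY aD aD, hYs, hLYdens aY aD aY, hLDdens aY aD aD]
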